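/- Let $(X, \mu)$ be a finite measure space with $\mu(X) > 0$, $\chi : X \to \mathbb{R}$ an integrable function, and $u : X \to \mathbb{R}$ a measurable function satisfying $0 < m \leq u \leq c_0 m$ $\mu$-a.e. for some constants $m > 0$ and $c_0 \geq 1$. Then $$\frac{\int_X \chi u^2\, d\mu}{\int_X u^2\, d\mu} \;\geq\; \frac{1}{c_0^2\, \mu(X)} \left( \int_X \chi_+\, d\mu \; - \; c_0^4 \int_X \chi_-\, d\mu \right),$$ where $\chi_+ = \max(\chi, 0)$ and $\chi_- = \max(-\chi, 0)$. -/

import Mathlib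

open MeasureTheory

private lemma key_ineq (P N A B V m c : ℝ) (hP : 0 ≤ P) (hN : 0 ≤ N)
    (hA : m^2*P - c^2*m^2*N ≤ A) (hB1 : m^2*V ≤ B) (hB2 : B ≤ c^2*m^2*V)
    (hV : 0 < V) (hm : 0 < m) (hc : 1 ≤ c) : (P - c^4*N)*B ≤ A*(c^2*V) := by
  have hc0 : (0:ℝ) < c := lt_of_lt_of_le one_pos hc
  have hc2V : (0:ℝ) ≤ c^2*V := by positivity
  have hc2 : (1:ℝ) ≤ c^2 := by nlinarith
  have hc42 : (0:ℝ) ≤ c^4 - c^2 := by nlinarith [mul_nonneg (sq_nonneg c) (sub_nonneg.2 hc2)]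
  rcases le_or_gt (c^2*N) P with h | h
  · rcases le_or_gt (P - c^4*N) 0 with h2 | h2
    · have hB : 0 < B := lt_of_lt_of_le (by positivity) hB1
      have hA0 : 0 ≤ A := le_trans (by nlinarith) hA
      calc (P - c^4*N)*B ≤ 0 := mul_nonpos_of_nonpos_of_nonneg h2 hB.le
        _ ≤ A*(c^2*V) := mul_nonneg hA0 hc2V
    · have t1 : (P - c^4*N)*B ≤ (P - c^4*N)*(c^2*m^2*V) :=
        mul_le_mul_of_nonneg_left hB2 h2.le
      have hcc : 0 ≤ (c^4 - c^2)*N*(m^2*V) :=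
        mul_nonneg (mul_nonneg hc42 hN) (by positivity)
      have t3 := mul_le_mul_of_nonneg_right hA hc2V
      nlinarith [t1, hcc, t3]
  · have hneg : P - c^4*N ≤ 0 := by nlinarith [mul_nonneg hc42 hN]
    have t1 : (P - c^4*N)*B ≤ (P - c^4*N)*(m^2*V) := mul_le_mul_of_nonpos_left hB1 hneg
    have h1 := mul_le_mul_of_nonneg_right
      (mul_le_mul_of_nonneg_left hA (by positivity : (0:ℝ) ≤ c^2)) hV.le
    have h2 : 0 ≤ (c^2-1)*P*(m^2*V) :=
      mul_nonneg (mul_nonneg (by nlinarith) hP) (by positivity)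
    nlinarith [t1, h1, h2]

/-- Rayleigh-quotient lower bound (Lemma 4.1): if `0 < m ≤ u ≤ c₀ m` a.e., then
`(∫ χ u²)/(∫ u²) ≥ (c₀² μ(X))⁻¹ (∫ χ₊ - c₀⁴ ∫ χ₋)`. -/
theorem stmt_2 {X : Type*} [MeasurableSpace X] (μ : Measure X) [IsFiniteMeasure μ]
    (hpos : 0 < μ Set.univ) (χ u : X → ℝ) (hχ : Integrable χ μ) (hu_meas : Measurable u)
    (m c₀ : ℝ) (hm : 0 < m) (hc₀ : 1 ≤ c₀)
    (hu : ∀ᵐ x ∂μ, m ≤ u x ∧ u x ≤ c₀ * m) :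
    (∫ x, χ x * (u x) ^ 2 ∂μ) / (∫ x, (u x) ^ 2 ∂μ) ≥
      (1 / (c₀ ^ 2 * (μ Set.univ).toReal)) *
        ((∫ x, max (χ x) 0 ∂μ) - c₀ ^ 4 * ∫ x, max (-(χ x)) 0 ∂μ) := by
  have hc₀0 : (0:ℝ) < c₀ := lt_of_lt_of_le one_pos hc₀
  have hV : (0:ℝ) < (μ Set.univ).toReal :=
    ENNReal.toReal_pos hpos.ne' (measure_ne_top μ _)
  set V := (μ Set.univ).toReal with hVdef
  -- a.e. bounds on u²
  have hu2 : ∀ᵐ x ∂μ, m^2 ≤ (u x)^2 ∧ (u x)^2 ≤ c₀^2 * m^2 := by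
    filter_upwards [hu] with x ⟨h1, h2⟩
    constructor <;> nlinarith
  have hu2m : AEStronglyMeasurable (fun x => (u x)^2) μ :=
    ((hu_meas.pow_const 2)).aestronglyMeasurable
  -- integrability facts
  have hu2int : Integrable (fun x => (u x)^2) μ := by
    refine Integrable.mono' (integrable_const (c₀^2 * m^2)) hu2m ?_
    filter_upwards [hu2] with x ⟨h1, h2⟩
    rw [Real.norm_eq_abs, abs_of_nonneg (sq_nonneg _)]; exact h2
  have hχp : Integrable (fun x => max (χ x) 0) μ := hχ.pos_part
  have hχn : Integrable (fun x => max (-(χ x)) 0) μ := hχ.neg.pos_part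
  have hmul : ∀ (f : X → ℝ), Integrable f μ → Integrable (fun x => f x * (u x)^2) μ := by
    intro f hf
    refine Integrable.mono' (hf.norm.const_mul (c₀^2 * m^2))
      (hf.aestronglyMeasurable.mul hu2m) ?_
    filter_upwards [hu2] with x ⟨h1, h2⟩
    rw [Real.norm_eq_abs, abs_mul, abs_of_nonneg (sq_nonneg (u x))]
    have : 0 ≤ |f x| := abs_nonneg _
    calc |f x| * (u x)^2 ≤ |f x| * (c₀^2 * m^2) := by nlinarith
      _ = c₀^2 * m^2 * ‖f x‖ := by rw [Real.norm_eq_abs]; ring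
  have hχu2 : Integrable (fun x => χ x * (u x)^2) μ := hmul χ hχ
  have hχpu2 : Integrable (fun x => max (χ x) 0 * (u x)^2) μ := hmul _ hχp
  have hχnu2 : Integrable (fun x => max (-(χ x)) 0 * (u x)^2) μ := hmul _ hχn
  set P := ∫ x, max (χ x) 0 ∂μ with hPdef
  set N := ∫ x, max (-(χ x)) 0 ∂μ with hNdef
  set A := ∫ x, χ x * (u x)^2 ∂μ with hAdef
  set B := ∫ x, (u x)^2 ∂μ with hBdef
  have hP : 0 ≤ P := integral_nonneg fun x => le_max_right _ _
  have hN : 0 ≤ N := integral_nonneg fun x => le_max_right _ _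
  -- split A
  have hAsplit : A = (∫ x, max (χ x) 0 * (u x)^2 ∂μ) - ∫ x, max (-(χ x)) 0 * (u x)^2 ∂μ := by
    rw [hAdef, ← integral_sub hχpu2 hχnu2]
    congr 1; ext x
    have : max (χ x) 0 - max (-(χ x)) 0 = χ x := by
      rcases le_total (χ x) 0 with h | h
      · rw [max_eq_right h, max_eq_left (by linarith)]; ring
      · rw [max_eq_left h, max_eq_right (by linarith)]; ring
    nlinarith [this]
  -- bounds
  have hIp : m^2 * P ≤ ∫ x, max (χ x) 0 * (u x)^2 ∂μ := by
    rw [hPdef, ← integral_const_mul]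
    refine integral_mono_ae (hχp.const_mul _) hχpu2 ?_
    filter_upwards [hu2] with x ⟨h1, _⟩
    have h0 : 0 ≤ max (χ x) 0 := le_max_right _ _
    nlinarith
  have hIn : (∫ x, max (-(χ x)) 0 * (u x)^2 ∂μ) ≤ c₀^2 * m^2 * N := by
    rw [hNdef, ← integral_const_mul]
    refine integral_mono_ae hχnu2 (hχn.const_mul _) ?_
    filter_upwards [hu2] with x ⟨_, h2⟩
    have h0 : 0 ≤ max (-(χ x)) 0 := le_max_right _ _
    nlinarith
  have hA : m^2 * P - c₀^2 * m^2 * N ≤ A := by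
    rw [hAsplit]; linarith
  have hB1 : m^2 * V ≤ B := by
    have := integral_mono_ae (integrable_const (m^2)) hu2int
      (by filter_upwards [hu2] with x ⟨h1, _⟩; exact h1)
    simpa [integral_const, hVdef, mul_comm, measureReal_def] using this
  have hB2 : B ≤ c₀^2 * m^2 * V := by
    have := integral_mono_ae hu2int (integrable_const (c₀^2 * m^2))
      (by filter_upwards [hu2] with x ⟨_, h2⟩; exact h2)
    simpa [integral_const, hVdef, mul_comm, measureReal_def] using this
  have hBpos : 0 < B := lt_of_lt_of_le (by positivity) hB1
  rw [ge_iff_le, one_div, inv_mul_eq_div, div_le_div_iff₀ (by positivity) hBpos]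
  exact key_ineq P N A B V m c₀ hP hN hA hB1 hB2 hV hm hc₀
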